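/- For every integer t ≥ 1, every t-atom H satisfies Tr(H) ≥ t. -/

import Mathlib

/-- `A` dominates `B` in `G`: every vertex of `B` has a neighbour in `A`. -/
def SimpleGraph.Dominates {V : Type*} (G : SimpleGraph V) (A B : Finset V) : Prop :=
  ∀ b ∈ B, ∃ a ∈ A, G.Adj a b

/-- `P : Fin k → Finset V` is a transitive `k`-partition of `G`. -/
def SimpleGraph.IsTransitivePartition {V : Type*} (G : SimpleGraph V)
    {k : ℕ} (P : Fin k → Finset V) : Prop :=
  (∀ i, (P i).Nonempty) ∧ (∀ v : V, ∃! i, v ∈ P i) ∧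
  (∀ i j : Fin k, i < j → G.Dominates (P i) (P j))

/-- The transitivity `Tr(G)`: the largest `k` admitting a transitive `k`-partition. -/
noncomputable def SimpleGraph.transitivity {V : Type*} [Fintype V] (G : SimpleGraph V) : ℕ :=
  sSup {k : ℕ | ∃ P : Fin k → Finset V, G.IsTransitivePartition P}

/-- `H` is (isomorphic to) a subgraph of `G`. -/
def ContainsSubgraph {α β : Type*} (H : SimpleGraph α) (G : SimpleGraph β) : Prop :=
  ∃ f : α → β, Function.Injective f ∧ ∀ a b, H.Adj a b → G.Adj (f a) (f b)

/-- `H` is (isomorphic to) an induced subgraph of `G`. -/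
def ContainsInduced {α β : Type*} (H : SimpleGraph α) (G : SimpleGraph β) : Prop :=
  Nonempty (H ↪g G)

/-- The complete bipartite graph `K_{t,t}`. -/
def Ktt (t : ℕ) : SimpleGraph (Fin t ⊕ Fin t) := completeBipartiteGraph (Fin t) (Fin t)

/-- `K_{t,t}` minus one edge. -/
def KttMinusE (t : ℕ) : SimpleGraph (Fin t ⊕ Fin t) :=
  (Ktt t).deleteEdges {e | ∃ h : 0 < t, e = s(Sum.inl ⟨0, h⟩, Sum.inr ⟨0, h⟩)}

/-- A graph on `Fin m ⊕ Fin n` is a bipartite chain graph (w.r.t. the canonical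
orderings of the two sides): edges only go between the two sides, and
neighbourhoods are nested along each ordering. -/
def IsBipartiteChain {m n : ℕ} (G : SimpleGraph (Fin m ⊕ Fin n)) : Prop :=
  (∀ i j : Fin m, ¬ G.Adj (Sum.inl i) (Sum.inl j)) ∧
  (∀ i j : Fin n, ¬ G.Adj (Sum.inr i) (Sum.inr j)) ∧
  (∀ i j : Fin m, i ≤ j → ∀ y : Fin n, G.Adj (Sum.inl j) (Sum.inr y) → G.Adj (Sum.inl i) (Sum.inr y)) ∧
  (∀ i j : Fin n, i ≤ j → ∀ x : Fin m, G.Adj (Sum.inl x) (Sum.inr j) → G.Adj (Sum.inl x) (Sum.inr i))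


/-- One step of the `t`-atom construction: starting from the graph `H` on `α`,
add an independent set `Fin r` of new vertices, a perfect matching between the new
vertices and the `r`-element subset `W = range w` of the old vertices (via the
injection `w`), and join every old vertex outside `W` to exactly one new vertex,
namely the one given by `assign`. -/
def atomStep {α : Type} (H : SimpleGraph α) {r : ℕ} (w : Fin r → α) (assign : α → Fin r) :
    SimpleGraph (α ⊕ Fin r) where
  Adj u v :=
    match u, v with
    | Sum.inl a, Sum.inl b => H.Adj a b
    | Sum.inl a, Sum.inr i => w i = a ∨ (a ∉ Set.range w ∧ assign a = i)
    | Sum.inr i, Sum.inl a => w i = a ∨ (a ∉ Set.range w ∧ assign a = i)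
    | Sum.inr _, Sum.inr _ => False
  symm := by
    constructor
    rintro (a | i) (b | j) h
    · exact H.adj_symm h
    · exact h
    · exact h
    · exact h.elim
  loopless := by
    constructor
    rintro (a | i) h
    · exact H.irrefl h
    · exact h

/-- `IsTAtom t H`: the graph `H` is a `t`-atom.  The only `1`-atom is `K₁`, the only
`2`-atom is `K₂`, and for `t ≥ 3` a `t`-atom is obtained from a `(t-1)`-atom `H` on a
vertex set of size `n` by choosing `r ∈ {1,...,n}`, an `r`-subset `W` (the range of the
injection `w`), and performing the construction `atomStep`. -/
inductive IsTAtom : ℕ → ∀ {α : Type}, SimpleGraph α → Prop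
  | one : IsTAtom 1 (⊥ : SimpleGraph (Fin 1))
  | two : IsTAtom 2 (⊤ : SimpleGraph (Fin 2))
  | step {t : ℕ} {α : Type} [Fintype α] {H : SimpleGraph α} {r : ℕ}
      (ht : 2 ≤ t) (hH : IsTAtom t H) (hr : 1 ≤ r) (hrcard : r ≤ Fintype.card α)
      (w : Fin r → α) (hw : Function.Injective w) (assign : α → Fin r) :
      IsTAtom (t + 1) (atomStep H w assign)

lemma part_card_bound {α : Type*} [Fintype α] {G : SimpleGraph α} {k : ℕ}
    {P : Fin k → Finset α} (h : G.IsTransitivePartition P) : k ≤ Fintype.card α := by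
  choose f hf using fun i => h.1 i
  have hinj : Function.Injective f := by
    intro i j hij
    obtain ⟨m, _, hu⟩ := h.2.1 (f i)
    have h1 := hu i (hf i)
    have h2 := hu j (hij ▸ hf j)
    rw [h1, h2]
  simpa using Fintype.card_le_of_injective f hinj

lemma atom_exists_partition {t : ℕ} {α : Type} [Fintype α] {H : SimpleGraph α}
    (hH : IsTAtom t H) : ∃ P : Fin t → Finset α, H.IsTransitivePartition P := by
  induction hH with
  | one =>
      refine ⟨fun _ => Finset.univ, fun i => ⟨0, Finset.mem_univ _⟩, ?_, ?_⟩
      · intro v; exact ⟨0, Finset.mem_univ _, fun j _ => Subsingleton.elim _ _⟩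
      · intro i j hij; omega
  | two =>
      refine ⟨fun i => {i}, fun i => ⟨i, Finset.mem_singleton_self i⟩, ?_, ?_⟩
      · intro v
        exact ⟨v, Finset.mem_singleton_self v, fun j hj => (Finset.mem_singleton.mp hj).symm⟩
      · intro i j hij b hb
        refine ⟨i, Finset.mem_singleton_self i, ?_⟩
        have hb' : b = j := Finset.mem_singleton.mp hb
        subst hb'
        exact hij.ne
  | @step t α _ H r ht hH' hr hrcard w hw assign ih =>
      obtain ⟨P, hP⟩ := ih
      classical
      refine ⟨Fin.cases (Finset.univ.map Function.Embedding.inr)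
        (fun i => (P i).map (Function.Embedding.inl)), ?_, ?_, ?_⟩
      · intro i
        refine Fin.cases ?_ ?_ i
        · have : Nonempty (Fin r) := ⟨⟨0, hr⟩⟩
          simpa using Finset.univ_nonempty (α := Fin r)
        · intro i'
          simp only [Fin.cases_succ]
          exact (hP.1 i').map
      · rintro (a | k)
        · obtain ⟨i, hi, hu⟩ := hP.2.1 a
          refine ⟨i.succ, by simp [hi], ?_⟩
          intro j
          refine Fin.cases ?_ ?_ j
          · intro hj'
            simp at hj'
          · intro j' hj'
            simp only [Fin.cases_succ, Finset.mem_map, Function.Embedding.inl_apply] at hj'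
            obtain ⟨a', ha', heq⟩ := hj'
            cases heq
            exact congrArg Fin.succ (hu j' ha')
        · refine ⟨0, by simp, ?_⟩
          intro j
          refine Fin.cases ?_ ?_ j
          · intro _; rfl
          · intro j' hj'
            simp at hj'
      · intro i j hij b hb
        revert hb
        revert hij
        refine Fin.cases ?_ ?_ i
        · refine Fin.cases ?_ ?_ j
          · intro hij; exact absurd hij (lt_irrefl _)
          · intro j' _ hb
            simp only [Fin.cases_succ, Finset.mem_map, Function.Embedding.inl_apply] at hb
            obtain ⟨a, _, rfl⟩ := hb
            by_cases hmem : a ∈ Set.range w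
            · obtain ⟨k, hk⟩ := hmem
              exact ⟨Sum.inr k, by simp, Or.inl hk⟩
            · exact ⟨Sum.inr (assign a), by simp, Or.inr ⟨hmem, rfl⟩⟩
        · intro i'
          refine Fin.cases ?_ ?_ j
          · intro hij
            exact absurd hij (Fin.not_lt_zero _)
          · intro j' hij hb
            have hij' : i' < j' := Fin.succ_lt_succ_iff.mp hij
            simp only [Fin.cases_succ, Finset.mem_map, Function.Embedding.inl_apply] at hb
            obtain ⟨a, ha, rfl⟩ := hb
            obtain ⟨a', ha', hadj⟩ := hP.2.2 i' j' hij' a ha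
            exact ⟨Sum.inl a', by simp [ha'], hadj⟩

/-- For every integer `t ≥ 1`, every `t`-atom `H` satisfies `Tr(H) ≥ t`. -/
theorem atom_transitivity_ge (t : ℕ) (ht : 1 ≤ t) {α : Type} [Fintype α]
    (H : SimpleGraph α) (hH : IsTAtom t H) : t ≤ H.transitivity := by
  obtain ⟨P, hP⟩ := atom_exists_partition hH
  exact le_csSup ⟨Fintype.card α, fun k ⟨Q, hQ⟩ => part_card_bound hQ⟩ ⟨P, hP⟩
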